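/- Let ε ∈ ℝ and let H : (0,∞) × ℝ² → ℝ, written H(u,x,y), be continuously differentiable and satisfy u·∂_uH(u,x,y) + ε·(x·∂_yH(u,x,y) − y·∂_xH(u,x,y)) + 2H(u,x,y) = 0 for all u > 0 and (x,y) ∈ ℝ². Then there exists a function F : ℂ → ℝ such that H(u,x,y) = u^{−2} · F( exp(−iε·log u)·(x+iy) ) for all u > 0 and (x,y) ∈ ℝ² (where exp and log are the complex exponential and the real logarithm, and x+iy ∈ ℂ). -/

import Mathlib

/-- Case 3: pp-wave profile invariant under ε∂_θ + u∂_u − v∂_v. -/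
theorem ppwave_case3_homothety_rotation_invariance
    (ε : ℝ) (H : ℝ → ℝ → ℝ → ℝ)
    (hH : ContDiffOn ℝ 1 (fun p : ℝ × ℝ × ℝ => H p.1 p.2.1 p.2.2)
      {p : ℝ × ℝ × ℝ | 0 < p.1})
    (hpde : ∀ u x y : ℝ, 0 < u →
      u * deriv (fun u' => H u' x y) u
        + ε * (x * deriv (fun y' => H u x y') y - y * deriv (fun x' => H u x' y) x)
        + 2 * H u x y = 0) :
    ∃ F : ℂ → ℝ, ∀ u x y : ℝ, 0 < u →
      H u x y = (u ^ 2)⁻¹ *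
        F (Complex.exp (-Complex.I * (ε : ℂ) * (Real.log u : ℂ))
            * ((x : ℂ) + (y : ℂ) * Complex.I)) := by
  classical
  set Hf : ℝ × ℝ × ℝ → ℝ := fun p => H p.1 p.2.1 p.2.2 with hHfdef
  have hopen : IsOpen {p : ℝ × ℝ × ℝ | 0 < p.1} :=
    isOpen_lt continuous_const continuous_fst
  -- linearity helper
  have hlin : ∀ (f : ℝ × ℝ × ℝ →L[ℝ] ℝ) (a b c : ℝ),
      f (a, b, c) = a * f (1, 0, 0) + b * f (0, 1, 0) + c * f (0, 0, 1) := by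
    intro f a b c
    have h : (a, b, c) = a • ((1:ℝ), (0:ℝ), (0:ℝ)) + b • ((0:ℝ), (1:ℝ), (0:ℝ))
        + c • ((0:ℝ), (0:ℝ), (1:ℝ)) := by
      simp [Prod.ext_iff]
    rw [h]
    simp only [map_add, map_smul, smul_eq_mul]
  -- differentiability
  have hdiff : ∀ p : ℝ × ℝ × ℝ, 0 < p.1 → HasFDerivAt Hf (fderiv ℝ Hf p) p := by
    intro p hp
    have : DifferentiableAt ℝ Hf p :=
      (hH.differentiableOn one_ne_zero).differentiableAt (hopen.mem_nhds hp)
    exact this.hasFDerivAt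
  -- PDE in terms of fderiv
  have hpde' : ∀ u x y : ℝ, 0 < u →
      u * fderiv ℝ Hf (u, x, y) (1, 0, 0)
        + ε * (x * fderiv ℝ Hf (u, x, y) (0, 0, 1)
              - y * fderiv ℝ Hf (u, x, y) (0, 1, 0))
        + 2 * Hf (u, x, y) = 0 := by
    intro u x y hu
    have hf := hdiff (u, x, y) hu
    have h1 : deriv (fun u' => H u' x y) u = fderiv ℝ Hf (u, x, y) (1, 0, 0) := by
      have hc : HasDerivAt (fun u' : ℝ => ((u', x, y) : ℝ × ℝ × ℝ))
          ((1:ℝ), (0:ℝ), (0:ℝ)) u :=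
        (hasDerivAt_id u).prodMk ((hasDerivAt_const u x).prodMk (hasDerivAt_const u y))
      exact (hf.comp_hasDerivAt u hc).deriv
    have h2 : deriv (fun x' => H u x' y) x = fderiv ℝ Hf (u, x, y) (0, 1, 0) := by
      have hc : HasDerivAt (fun x' : ℝ => ((u, x', y) : ℝ × ℝ × ℝ))
          ((0:ℝ), (1:ℝ), (0:ℝ)) x :=
        (hasDerivAt_const x u).prodMk ((hasDerivAt_id x).prodMk (hasDerivAt_const x y))
      exact (hf.comp_hasDerivAt x hc).deriv
    have h3 : deriv (fun y' => H u x y') y = fderiv ℝ Hf (u, x, y) (0, 0, 1) := by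
      have hc : HasDerivAt (fun y' : ℝ => ((u, x, y') : ℝ × ℝ × ℝ))
          ((0:ℝ), (0:ℝ), (1:ℝ)) y :=
        (hasDerivAt_const y u).prodMk ((hasDerivAt_const y x).prodMk (hasDerivAt_id y))
      exact (hf.comp_hasDerivAt y hc).deriv
    have := hpde u x y hu
    rw [h1, h2, h3] at this
    exact this
  -- main constancy along characteristic curves
  have hconst : ∀ x₀ y₀ s : ℝ,
      Real.exp (2 * s) * H (Real.exp s)
        (x₀ * Real.cos (ε * s) - y₀ * Real.sin (ε * s))
        (x₀ * Real.sin (ε * s) + y₀ * Real.cos (ε * s))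
      = H 1 x₀ y₀ := by
    intro x₀ y₀ s
    set g : ℝ → ℝ := fun s => Real.exp (2 * s) * H (Real.exp s)
        (x₀ * Real.cos (ε * s) - y₀ * Real.sin (ε * s))
        (x₀ * Real.sin (ε * s) + y₀ * Real.cos (ε * s)) with hgdef
    have hg : ∀ t : ℝ, HasDerivAt g 0 t := by
      intro t
      have hεt : HasDerivAt (fun t : ℝ => ε * t) ε t := by simpa using (hasDerivAt_id t).const_mul ε
      have hcos : HasDerivAt (fun t : ℝ => Real.cos (ε * t))
          (-Real.sin (ε * t) * ε) t := (Real.hasDerivAt_cos (ε * t)).comp t hεt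
      have hsin : HasDerivAt (fun t : ℝ => Real.sin (ε * t))
          (Real.cos (ε * t) * ε) t := (Real.hasDerivAt_sin (ε * t)).comp t hεt
      have hX : HasDerivAt (fun t : ℝ => x₀ * Real.cos (ε * t) - y₀ * Real.sin (ε * t))
          (x₀ * (-Real.sin (ε * t) * ε) - y₀ * (Real.cos (ε * t) * ε)) t :=
        (hcos.const_mul x₀).sub (hsin.const_mul y₀)
      have hY : HasDerivAt (fun t : ℝ => x₀ * Real.sin (ε * t) + y₀ * Real.cos (ε * t))
          (x₀ * (Real.cos (ε * t) * ε) + y₀ * (-Real.sin (ε * t) * ε)) t :=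
        (hsin.const_mul x₀).add (hcos.const_mul y₀)
      have hγ : HasDerivAt (fun t : ℝ =>
          ((Real.exp t, x₀ * Real.cos (ε * t) - y₀ * Real.sin (ε * t),
            x₀ * Real.sin (ε * t) + y₀ * Real.cos (ε * t)) : ℝ × ℝ × ℝ))
          (Real.exp t, x₀ * (-Real.sin (ε * t) * ε) - y₀ * (Real.cos (ε * t) * ε),
            x₀ * (Real.cos (ε * t) * ε) + y₀ * (-Real.sin (ε * t) * ε)) t :=
        (Real.hasDerivAt_exp t).prodMk (hX.prodMk hY)
      set p : ℝ × ℝ × ℝ := (Real.exp t,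
          x₀ * Real.cos (ε * t) - y₀ * Real.sin (ε * t),
          x₀ * Real.sin (ε * t) + y₀ * Real.cos (ε * t)) with hpdef
      have hf := hdiff p (Real.exp_pos t)
      have hcomp : HasDerivAt (fun t : ℝ => H (Real.exp t)
          (x₀ * Real.cos (ε * t) - y₀ * Real.sin (ε * t))
          (x₀ * Real.sin (ε * t) + y₀ * Real.cos (ε * t)))
          (fderiv ℝ Hf p
            (Real.exp t, x₀ * (-Real.sin (ε * t) * ε) - y₀ * (Real.cos (ε * t) * ε),
              x₀ * (Real.cos (ε * t) * ε) + y₀ * (-Real.sin (ε * t) * ε))) t :=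
        HasFDerivAt.comp_hasDerivAt (l := Hf) (l' := fderiv ℝ Hf p) t hf hγ
      have h2t : HasDerivAt (fun t : ℝ => (2 : ℝ) * t) 2 t := by
        simpa using (hasDerivAt_id t).const_mul (2 : ℝ)
      have he2 : HasDerivAt (fun t : ℝ => Real.exp (2 * t)) (Real.exp (2 * t) * 2) t :=
        (Real.hasDerivAt_exp (2 * t)).comp t h2t
      have hgt := he2.mul hcomp
      have hpde'' := hpde' (Real.exp t)
        (x₀ * Real.cos (ε * t) - y₀ * Real.sin (ε * t))
        (x₀ * Real.sin (ε * t) + y₀ * Real.cos (ε * t)) (Real.exp_pos t)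
      rw [hlin] at hgt
      have hzero : Real.exp (2 * t) * 2 * H (Real.exp t)
          (x₀ * Real.cos (ε * t) - y₀ * Real.sin (ε * t))
          (x₀ * Real.sin (ε * t) + y₀ * Real.cos (ε * t))
        + Real.exp (2 * t) *
          (Real.exp t * (fderiv ℝ Hf p) (1, 0, 0)
            + (x₀ * (-Real.sin (ε * t) * ε) - y₀ * (Real.cos (ε * t) * ε)) *
              (fderiv ℝ Hf p) (0, 1, 0)
            + (x₀ * (Real.cos (ε * t) * ε) + y₀ * (-Real.sin (ε * t) * ε)) *
              (fderiv ℝ Hf p) (0, 0, 1)) = 0 := by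
        have hHp : Hf p = H (Real.exp t)
            (x₀ * Real.cos (ε * t) - y₀ * Real.sin (ε * t))
            (x₀ * Real.sin (ε * t) + y₀ * Real.cos (ε * t)) := rfl
        rw [hpdef] at *
        linear_combination Real.exp (2 * t) * hpde''
      rw [hzero] at hgt
      exact hgt
    have hd : Differentiable ℝ g := fun t => (hg t).differentiableAt
    have hd0 : ∀ t, deriv g t = 0 := fun t => (hg t).deriv
    have := is_const_of_deriv_eq_zero hd hd0 s 0
    simpa [hgdef] using this
  -- construct F and finish
  refine ⟨fun z => H 1 z.re z.im, ?_⟩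
  intro u x y hu
  set L := Real.log u with hL
  set c := Real.cos (ε * L) with hc
  set s := Real.sin (ε * L) with hs
  set x₀ := x * c + y * s with hx₀
  set y₀ := -x * s + y * c with hy₀
  have hcs : c ^ 2 + s ^ 2 = 1 := by
    rw [hc, hs]; exact Real.cos_sq_add_sin_sq (ε * L)
  have key := hconst x₀ y₀ L
  have heL : Real.exp L = u := Real.exp_log hu
  have he2L : Real.exp (2 * L) = u ^ 2 := by
    rw [two_mul, Real.exp_add, heL]; ring
  have hXL : x₀ * c - y₀ * s = x := by rw [hx₀, hy₀]; linear_combination x * hcs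
  have hYL : x₀ * s + y₀ * c = y := by rw [hx₀, hy₀]; linear_combination y * hcs
  rw [heL, he2L, hXL, hYL] at key
  -- compute the real and imaginary parts of the complex argument
  have hre : (Complex.exp (-Complex.I * (ε : ℂ) * (L : ℂ))
      * ((x : ℂ) + (y : ℂ) * Complex.I)).re = x₀ := by
    rw [hx₀, hc, hs]
    simp [Complex.exp_re, Complex.exp_im, Complex.mul_re, Complex.mul_im,
      Real.cos_neg, Real.sin_neg]
    ring
  have him : (Complex.exp (-Complex.I * (ε : ℂ) * (L : ℂ))
      * ((x : ℂ) + (y : ℂ) * Complex.I)).im = y₀ := by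
    rw [hy₀, hc, hs]
    simp [Complex.exp_re, Complex.exp_im, Complex.mul_re, Complex.mul_im,
      Real.cos_neg, Real.sin_neg]
    ring
  simp only [hre, him]
  rw [← key]
  have hu2 : (u : ℝ) ^ 2 ≠ 0 := pow_ne_zero _ (ne_of_gt hu)
  field_simp
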